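/- arXiv:2512.20361 — 4 statements merged into one kernel-verified Lean document; each statement's English description precedes it below -/
import Mathlib

section
/- Let a ∈ ℂ with Im a > 0 and η ∈ ℂ. Suppose f is continuous on {z ∈ ℂ : Im z ≥ 0} ∖ {a}, holomorphic on ℍ ∖ {a}, real-valued at every point of ℝ, the difference f(z) − conj(η)/(π·(z − a)) is bounded on some punctured neighborhood of a, and f(z) → 0 as |z| → ∞ within {Im z ≥ 0}. Then f(z) = conj(η)/(π·(z − a)) + η/(π·(z − conj(a))) for every z ≠ a with Im z ≥ 0. -/
open Complex Set Filter Metric Function Bornology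
open scoped Topology Real

/-- Uniqueness for the half-plane Riemann–Hilbert boundary value problem:
a function continuous on the closed upper half-plane off `a`, holomorphic on
`ℍ ∖ {a}`, real on `ℝ`, with prescribed singularity `conj(η)/(π(z−a))` at `a`
(up to a bounded error) and decaying at infinity, must equal
`conj(η)/(π(z−a)) + η/(π(z−conj a))`. -/
theorem halfPlane_fermion_uniqueness (a η : ℂ) (ha : 0 < a.im) (f : ℂ → ℂ)
    (hcont : ContinuousOn f ({z : ℂ | 0 ≤ z.im} \ {a}))
    (hholo : ∀ z : ℂ, 0 < z.im → z ≠ a → DifferentiableAt ℂ f z)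
    (hreal : ∀ x : ℝ, (f x).im = 0)
    (hbdd : ∃ C ε : ℝ, 0 < ε ∧ ∀ z : ℂ, z ≠ a → ‖z - a‖ < ε →
      ‖f z - (starRingEnd ℂ) η / (↑Real.pi * (z - a))‖ ≤ C)
    (hdecay : ∀ ε : ℝ, 0 < ε → ∃ R : ℝ, ∀ z : ℂ, 0 ≤ z.im → R ≤ ‖z‖ →
      ‖f z‖ ≤ ε) :
    ∀ z : ℂ, 0 ≤ z.im → z ≠ a →
      f z = (starRingEnd ℂ) η / (↑Real.pi * (z - a)) +
        η / (↑Real.pi * (z - (starRingEnd ℂ) a)) := by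
  obtain ⟨C, ε, hε, hC⟩ := hbdd
  have hπpos : (0:ℝ) < Real.pi := Real.pi_pos
  have hπ : (Real.pi : ℂ) ≠ 0 := Complex.ofReal_ne_zero.2 Real.pi_pos.ne'
  set S : ℂ → ℂ := fun z => (starRingEnd ℂ) η / (↑Real.pi * (z - a)) +
      η / (↑Real.pi * (z - (starRingEnd ℂ) a)) with hSdef
  set g : ℂ → ℂ := fun z => f z - S z with hgdef
  set G : ℂ → ℂ := Function.update g a (limUnder (𝓝[≠] a) g) with hGdef
  -- basic nonvanishing
  have hne2 : ∀ z : ℂ, 0 ≤ z.im → z - (starRingEnd ℂ) a ≠ 0 := by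
    intro z hz h
    have hza : z = (starRingEnd ℂ) a := sub_eq_zero.mp h
    rw [hza] at hz
    rw [Complex.conj_im] at hz
    linarith
  have hSdiff : ∀ z : ℂ, z ≠ a → z - (starRingEnd ℂ) a ≠ 0 → DifferentiableAt ℂ S z := by
    intro z h1 h2
    have d1 : (↑Real.pi * (z - a)) ≠ 0 := mul_ne_zero hπ (sub_ne_zero.2 h1)
    have d2 : (↑Real.pi * (z - (starRingEnd ℂ) a)) ≠ 0 := mul_ne_zero hπ h2
    apply DifferentiableAt.add
    · exact (differentiableAt_const _).div
        (((differentiableAt_id.sub (differentiableAt_const _))).const_mul _) d1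
    · exact (differentiableAt_const _).div
        (((differentiableAt_id.sub (differentiableAt_const _))).const_mul _) d2
  have hgdiff : ∀ z : ℂ, 0 < z.im → z ≠ a → DifferentiableAt ℂ g z := by
    intro z h1 h2
    exact (hholo z h1 h2).sub (hSdiff z h2 (hne2 z h1.le))
  have hgcont : ContinuousOn g ({z : ℂ | 0 ≤ z.im} \ {a}) := by
    apply hcont.sub
    intro z hz
    exact ((hSdiff z hz.2 (hne2 z hz.1)).continuousAt).continuousWithinAt
  have hSim : ∀ x : ℝ, (S ↑x).im = 0 := by
    intro x
    have h1 : η / (↑Real.pi * (↑x - (starRingEnd ℂ) a)) =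
        starRingEnd ℂ ((starRingEnd ℂ) η / (↑Real.pi * ((x:ℂ) - a))) := by
      rw [map_div₀, map_mul, map_sub]
      simp [Complex.conj_ofReal]
    rw [hSdef]
    simp only []
    rw [h1, Complex.add_conj]
    simp
  -- radius
  set r : ℝ := min a.im ε with hrdef
  have hr : 0 < r := lt_min ha hε
  have hball : ∀ w ∈ ball a r, 0 < w.im := by
    intro w hw
    have h1 : ‖w - a‖ < r := by rwa [mem_ball, Complex.dist_eq] at hw
    have h2 : |(w - a).im| ≤ ‖w - a‖ := Complex.abs_im_le_norm _
    have h3 := abs_lt.mp (h2.trans_lt h1)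
    have h4 : (w - a).im = w.im - a.im := by simp
    have h5 : r ≤ a.im := min_le_left _ _
    rw [h4] at h3
    linarith [h3.1]
  -- boundedness of g near a
  have habove : BddAbove ((norm ∘ g) '' (ball a r \ {a})) := by
    refine ⟨C + ‖η‖ / (Real.pi * a.im), ?_⟩
    rintro x ⟨w, ⟨hw1, hw2⟩, rfl⟩
    have hwa : w ≠ a := hw2
    have hwim : 0 < w.im := hball w hw1
    have hsplit : g w = (f w - (starRingEnd ℂ) η / (↑Real.pi * (w - a))) -
        η / (↑Real.pi * (w - (starRingEnd ℂ) a)) := by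
      rw [hgdef]; simp only []; rw [hSdef]; ring
    have hb1 : ‖f w - (starRingEnd ℂ) η / (↑Real.pi * (w - a))‖ ≤ C := by
      apply hC w hwa
      have : ‖w - a‖ < r := by rwa [mem_ball, Complex.dist_eq] at hw1
      exact this.trans_le (min_le_right _ _)
    have hb2 : ‖η / (↑Real.pi * (w - (starRingEnd ℂ) a))‖ ≤
        ‖η‖ / (Real.pi * a.im) := by
      have h1 : a.im ≤ ‖w - (starRingEnd ℂ) a‖ := by
        have h2 : (w - (starRingEnd ℂ) a).im = w.im + a.im := by
          simp [Complex.sub_im, Complex.conj_im]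
        calc a.im ≤ w.im + a.im := by linarith
          _ ≤ |(w - (starRingEnd ℂ) a).im| := by rw [h2]; exact le_abs_self _
          _ ≤ _ := Complex.abs_im_le_norm _
      rw [norm_div, norm_mul, Complex.norm_real, Real.norm_eq_abs, abs_of_pos hπpos]
      gcongr
    calc ‖g w‖ = ‖g w‖ := rfl
      _ ≤ _ := by rw [hsplit]; exact (norm_sub_le _ _).trans (by gcongr)
  have hGd_ball : DifferentiableOn ℂ G (ball a r) := by
    rw [hGdef]
    exact Complex.differentiableOn_update_limUnder_of_bddAbove
      (isOpen_ball.mem_nhds (mem_ball_self hr))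
      (fun w hw => (hgdiff w (hball w hw.1) hw.2).differentiableWithinAt) habove
  have hGeq : ∀ w : ℂ, w ≠ a → G w = g w := fun w hw => Function.update_of_ne hw _ _
  have hGdiff : ∀ z : ℂ, 0 < z.im → DifferentiableAt ℂ G z := by
    intro z hz
    by_cases hza : z = a
    · subst hza
      exact hGd_ball.differentiableAt (isOpen_ball.mem_nhds (mem_ball_self hr))
    · exact (hgdiff z hz hza).congr_of_eventuallyEq
        (Filter.eventuallyEq_of_mem (isOpen_ne.mem_nhds hza) (fun w hw => hGeq w hw))
  -- continuity of G on the closed half-plane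
  have hGcont : ContinuousOn G {z : ℂ | 0 ≤ z.im} := by
    intro z hz
    have hz' : (0:ℝ) ≤ z.im := hz
    rcases hz'.lt_or_eq with h | h
    · exact (hGdiff z h).continuousAt.continuousWithinAt
    · have hza : z ≠ a := by
        intro he; rw [← he, ← h] at ha; exact lt_irrefl _ ha
      have hmem : {a}ᶜ ∈ 𝓝 z := compl_singleton_mem_nhds hza
      have h3 : 𝓝[{z : ℂ | 0 ≤ z.im}] z = 𝓝[{z : ℂ | 0 ≤ z.im} \ {a}] z := by
        rw [Set.diff_eq]; exact nhdsWithin_restrict' _ hmem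
      have h2 : ContinuousWithinAt g {z : ℂ | 0 ≤ z.im} z := by
        have h1 := hgcont z ⟨hz, hza⟩
        unfold ContinuousWithinAt at h1 ⊢
        rwa [h3]
      apply h2.congr_of_eventuallyEq
      · exact Filter.eventuallyEq_of_mem (mem_nhdsWithin_of_mem_nhds hmem)
          (fun w hw => hGeq w hw)
      · exact hGeq z hza
  -- G is real on the real axis
  have hGim0 : ∀ x : ℝ, (G ↑x).im = 0 := by
    intro x
    have hxa : (x:ℂ) ≠ a := by
      intro h
      have : (0:ℝ) < ((x:ℂ)).im := h ▸ ha
      simp at this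
    rw [hGeq _ hxa, hgdef]
    simp only []
    rw [Complex.sub_im, hreal x, hSim x, sub_zero]
  -- decay of G
  have hGdecay : ∀ ε' : ℝ, 0 < ε' → ∃ R : ℝ, ‖a‖ < R ∧
      ∀ z : ℂ, 0 ≤ z.im → R ≤ ‖z‖ → ‖G z‖ ≤ ε' := by
    intro ε' hε'
    obtain ⟨R₀, hR₀⟩ := hdecay (ε'/2) (by positivity)
    set B : ℝ := ‖η‖ / Real.pi with hBdef
    have hB : 0 ≤ B := by positivity
    set K : ℝ := 4 * B / ε' + 1 with hKdef
    have hK : 0 < K := by positivity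
    have hBK : B / K ≤ ε' / 4 := by
      rw [div_le_div_iff₀ hK (by positivity)]
      have : ε' * K = 4 * B + ε' := by rw [hKdef]; field_simp
      nlinarith
    refine ⟨max R₀ (‖a‖ + K), ?_, ?_⟩
    · calc ‖a‖ < ‖a‖ + K := by linarith
        _ ≤ _ := le_max_right _ _
    intro z hz hzR
    have hza : ‖a‖ + K ≤ ‖z‖ := le_trans (le_max_right _ _) hzR
    have h1 : K ≤ ‖z - a‖ := by
      have := norm_sub_norm_le z a
      linarith
    have h2 : K ≤ ‖z - (starRingEnd ℂ) a‖ := by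
      have := norm_sub_norm_le z ((starRingEnd ℂ) a)
      rw [Complex.norm_conj] at this
      linarith
    have hzne : z ≠ a := by
      intro h; rw [h] at hza; linarith
    have hT1 : ‖(starRingEnd ℂ) η / (↑Real.pi * (z - a))‖ ≤ ε' / 4 := by
      rw [norm_div, norm_mul, Complex.norm_real, Real.norm_eq_abs, abs_of_pos hπpos, Complex.norm_conj]
      calc ‖η‖ / (Real.pi * ‖z - a‖)
          ≤ ‖η‖ / (Real.pi * K) := by gcongr
        _ = B / K := by rw [hBdef]; field_simp
        _ ≤ ε' / 4 := hBK
    have hT2 : ‖η / (↑Real.pi * (z - (starRingEnd ℂ) a))‖ ≤ ε' / 4 := by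
      rw [norm_div, norm_mul, Complex.norm_real, Real.norm_eq_abs, abs_of_pos hπpos]
      calc ‖η‖ / (Real.pi * ‖z - (starRingEnd ℂ) a‖)
          ≤ ‖η‖ / (Real.pi * K) := by gcongr
        _ = B / K := by rw [hBdef]; field_simp
        _ ≤ ε' / 4 := hBK
    have hf : ‖f z‖ ≤ ε' / 2 := hR₀ z hz (le_trans (le_max_left _ _) hzR)
    rw [hGeq z hzne, hgdef]
    simp only []
    calc ‖f z - S z‖ ≤ ‖f z‖ + ‖S z‖ :=
          norm_sub_le _ _
      _ ≤ ε'/2 + (ε'/4 + ε'/4) := by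
          gcongr
          rw [hSdef]
          exact (norm_add_le _ _).trans (by gcongr)
      _ = ε' := by ring
  have hkey : ∀ σ : ℝ, |σ| = 1 → ∀ ε' : ℝ, 0 < ε' → ∀ z : ℂ, 0 < z.im →
      -(σ * (G z).im) ≤ ε' := by
    intro σ hσ ε' hε' z hz
    obtain ⟨R, hRa, hR⟩ := hGdecay ε' hε'
    set R' : ℝ := max R (‖z‖ + 1) with hR'def
    set D : Set ℂ := {w : ℂ | 0 < w.im} ∩ ball 0 R' with hDdef
    have hDopen : IsOpen D := (isOpen_lt continuous_const Complex.continuous_im).inter isOpen_ball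
    have hzD : z ∈ D := by
      refine ⟨hz, ?_⟩
      rw [mem_ball, dist_zero_right]
      calc ‖z‖ < ‖z‖ + 1 := lt_add_one _
        _ ≤ R' := le_max_right _ _
    have hDb : IsBounded D := isBounded_ball.subset inter_subset_right
    set u : ℂ → ℂ := fun w => Complex.exp ((σ:ℂ) * I * G w) with hudef
    have hu_abs : ∀ w, ‖u w‖ = Real.exp (-(σ * (G w).im)) := by
      intro w
      rw [hudef]
      simp only []
      rw [Complex.norm_exp]
      congr 1
      simp [Complex.mul_re, Complex.mul_im]
    have hclos : closure D ⊆ {w : ℂ | 0 ≤ w.im} ∩ closedBall 0 R' := by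
      apply closure_minimal
      · intro w hw
        have h1 : (0:ℝ) < w.im := hw.1
        exact ⟨h1.le, ball_subset_closedBall hw.2⟩
      · exact (isClosed_le continuous_const Complex.continuous_im).inter Metric.isClosed_closedBall
    have hcont_u : ContinuousOn u (closure D) := by
      apply Complex.continuous_exp.comp_continuousOn
      exact continuousOn_const.mul ((hGcont.mono (fun w hw => (hclos hw).1)))
    have hdiff_u : DifferentiableOn ℂ u D :=
      fun w hw => (((differentiableAt_const _).mul (hGdiff w hw.1)).cexp).differentiableWithinAt
    have hfront : ∀ w ∈ frontier D, ‖u w‖ ≤ Real.exp ε' := by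
      intro w hw
      rw [hDopen.frontier_eq] at hw
      obtain ⟨hwc, hwD⟩ := hw
      have hwim : 0 ≤ w.im := (hclos hwc).1
      have hwball : ‖w‖ ≤ R' := by
        have := (hclos hwc).2
        rwa [mem_closedBall, dist_zero_right] at this
      rw [hu_abs, Real.exp_le_exp]
      rcases hwim.lt_or_eq with him | him
      · have habs : R' ≤ ‖w‖ := by
          by_contra hcon
          push_neg at hcon
          exact hwD ⟨him, by rwa [mem_ball, dist_zero_right]⟩
        have hGw : ‖G w‖ ≤ ε' := hR w hwim (le_trans (le_max_left _ _) habs)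
        calc -(σ * (G w).im) ≤ |σ * (G w).im| := neg_le_abs _
          _ = |σ| * |(G w).im| := abs_mul _ _
          _ = |(G w).im| := by rw [hσ, one_mul]
          _ ≤ ‖G w‖ := Complex.abs_im_le_norm _
          _ ≤ ε' := hGw
      · have hw' : ((w.re : ℝ) : ℂ) = w := by
          apply Complex.ext
          · simp
          · simp [← him]
        have : (G w).im = 0 := by rw [← hw']; exact hGim0 w.re
        rw [this, mul_zero, neg_zero]
        exact hε'.le
    have hmax := Complex.norm_le_of_forall_mem_frontier_norm_le hDb
      ⟨hdiff_u, hcont_u⟩ hfront (subset_closure hzD)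
    rw [hu_abs, Real.exp_le_exp] at hmax
    exact hmax
  -- Im G vanishes on the open half-plane
  have hGim : ∀ z : ℂ, 0 < z.im → (G z).im = 0 := by
    intro z hz
    have h1 : -(G z).im ≤ 0 := by
      apply le_of_forall_pos_le_add
      intro ε' hε'
      have := hkey 1 (by simp) ε' hε' z hz
      simpa using this.trans (by linarith : ε' ≤ 0 + ε')
    have h2 : (G z).im ≤ 0 := by
      apply le_of_forall_pos_le_add
      intro ε' hε'
      have := hkey (-1) (by simp) ε' hε' z hz
      simpa using this.trans (by linarith : ε' ≤ 0 + ε')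
    linarith
  -- derivative of G vanishes on the open half-plane
  have hfd : ∀ z : ℂ, 0 < z.im → fderiv ℂ G z = 0 := by
    intro z hz
    have hdz : HasDerivAt G (deriv G z) z := (hGdiff z hz).hasDerivAt
    set d : ℂ := deriv G z with hddef
    -- horizontal direction
    have e1 : HasDerivAt (fun w : ℂ => G (z + w)) d 0 := by
      have h0 : HasDerivAt (fun w : ℂ => z + w) 1 0 := (hasDerivAt_id (0:ℂ)).const_add z
      have hg : HasDerivAt G d (z + 0) := by rwa [add_zero]
      have := hg.comp (0:ℂ) h0
      simpa [Function.comp_def] using this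
    have e2 : HasDerivAt (fun t : ℝ => G (z + ↑t)) d 0 := by
      have e1' : HasDerivAt (fun w : ℂ => G (z + w)) d ((0:ℝ):ℂ) := by
        rwa [Complex.ofReal_zero]
      exact e1'.comp_ofReal
    have e3 : HasDerivAt (fun t : ℝ => (G (z + ↑t)).im) d.im 0 := by
      have := (Complex.imCLM.hasFDerivAt.comp (0:ℝ) e2.hasFDerivAt).hasDerivAt
      simpa [Function.comp_def] using this
    have e4 : (fun t : ℝ => (G (z + ↑t)).im) = fun _ => (0:ℝ) := by
      funext t
      apply hGim
      simp [Complex.add_im, hz]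
    rw [e4] at e3
    have him_d : d.im = 0 := ((hasDerivAt_const (0:ℝ) (0:ℝ)).unique e3).symm
    -- vertical direction
    have f1 : HasDerivAt (fun w : ℂ => G (z + w * I)) (d * I) 0 := by
      have h0 : HasDerivAt (fun w : ℂ => z + w * I) I 0 := by
        have := ((hasDerivAt_id (0:ℂ)).mul_const I).const_add z
        simpa using this
      have hg : HasDerivAt G d (z + 0 * I) := by
        rw [zero_mul, add_zero]; exact hdz
      have := hg.comp (0:ℂ) h0
      simpa [Function.comp_def] using this
    have f2 : HasDerivAt (fun t : ℝ => G (z + ↑t * I)) (d * I) 0 := by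
      have f1' : HasDerivAt (fun w : ℂ => G (z + w * I)) (d * I) ((0:ℝ):ℂ) := by
        rwa [Complex.ofReal_zero]
      exact f1'.comp_ofReal
    have f3 : HasDerivAt (fun t : ℝ => (G (z + ↑t * I)).im) (d * I).im 0 := by
      have := (Complex.imCLM.hasFDerivAt.comp (0:ℝ) f2.hasFDerivAt).hasDerivAt
      simpa [Function.comp_def] using this
    have f4 : (fun t : ℝ => (G (z + ↑t * I)).im) =ᶠ[𝓝 (0:ℝ)] fun _ => (0:ℝ) := by
      have hmem : Set.Ioo (-z.im) z.im ∈ 𝓝 (0:ℝ) := Ioo_mem_nhds (by linarith) hz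
      filter_upwards [hmem] with t ht
      apply hGim
      have : (z + ↑t * I).im = z.im + t := by simp
      rw [this]
      linarith [ht.1]
    have f3' : HasDerivAt (fun _ : ℝ => (0:ℝ)) (d * I).im 0 :=
      f3.congr_of_eventuallyEq f4.symm
    have hre_d : d.re = 0 := by
      have := ((hasDerivAt_const (0:ℝ) (0:ℝ)).unique f3').symm
      rwa [Complex.mul_I_im] at this
    have hd0 : d = 0 := by
      apply Complex.ext <;> simp [hre_d, him_d]
    have hF : HasFDerivAt G (0 : ℂ →L[ℂ] ℂ) z := by
      have := hdz.hasFDerivAt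
      rw [hd0, ContinuousLinearMap.toSpanSingleton_zero] at this
      exact this
    exact hF.fderiv
  -- G is constant on the open half-plane
  have hopen : IsOpen {w : ℂ | 0 < w.im} := isOpen_lt continuous_const Complex.continuous_im
  have hconst : ∀ z w : ℂ, 0 < z.im → 0 < w.im → G z = G w := by
    intro z w hz hw
    exact (convex_halfSpace_im_gt 0).is_const_of_fderivWithin_eq_zero
      (fun x hx => (hGdiff x hx).differentiableWithinAt)
      (fun x hx => by rw [fderivWithin_of_isOpen hopen hx]; exact hfd x hx) hz hw
  -- constant value is 0
  have hGzero : ∀ z : ℂ, 0 < z.im → G z = 0 := by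
    intro z hz
    have hle : ∀ ε' : ℝ, 0 < ε' → ‖G z‖ ≤ ε' := by
      intro ε' hε'
      obtain ⟨R, hRa, hR⟩ := hGdecay ε' hε'
      set w : ℂ := (max R 1 : ℝ) * I with hwdef
      have hwim : 0 < w.im := by
        rw [hwdef]
        simp only [Complex.mul_im, Complex.ofReal_re, Complex.I_im, Complex.ofReal_im,
          Complex.I_re, mul_one, mul_zero, add_zero]
        calc (0:ℝ) < 1 := one_pos
          _ ≤ max R 1 := le_max_right _ _
      have hwabs : R ≤ ‖w‖ := by
        rw [hwdef]
        rw [norm_mul, Complex.norm_I, mul_one, Complex.norm_real, Real.norm_eq_abs]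
        rw [abs_of_pos (lt_of_lt_of_le one_pos (le_max_right _ _))]
        exact le_max_left _ _
      rw [hconst z w hz hwim]
      exact hR w hwim.le hwabs
    have h0 : ‖G z‖ ≤ 0 := by
      apply le_of_forall_pos_le_add
      intro ε' hε'
      simpa using hle ε' hε'
    have := le_antisymm h0 (norm_nonneg _)
    exact norm_eq_zero.mp this
  have hGzero' : ∀ z : ℂ, 0 ≤ z.im → G z = 0 := by
    intro z hz
    have hz' : (0:ℝ) ≤ z.im := hz
    rcases hz'.lt_or_eq with h | h
    · exact hGzero z h
    · have hcw : ContinuousWithinAt G {w : ℂ | 0 ≤ w.im} z := hGcont z hz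
      have h1 : Tendsto G (𝓝[{w : ℂ | 0 < w.im}] z) (𝓝 (G z)) :=
        hcw.mono (fun w hw => (le_of_lt (hw : (0:ℝ) < w.im) : (0:ℝ) ≤ w.im))
      have h2 : Tendsto G (𝓝[{w : ℂ | 0 < w.im}] z) (𝓝 0) := by
        apply Filter.Tendsto.congr' ?_ tendsto_const_nhds
        exact eventually_nhdsWithin_of_forall (fun w hw => (hGzero w hw).symm)
      have hne : (𝓝[{w : ℂ | 0 < w.im}] z).NeBot := by
        rw [← mem_closure_iff_nhdsWithin_neBot]
        have hcl : closure {w : ℂ | 0 < w.im} = {w : ℂ | 0 ≤ w.im} :=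
          Complex.closure_setOf_lt_im 0
        rw [hcl]
        exact hz
      exact tendsto_nhds_unique h1 h2
  intro z hz hza
  have h1 : g z = 0 := by rw [← hGeq z hza]; exact hGzero' z hz
  have h2 : f z - S z = 0 := h1
  have h3 : f z = S z := sub_eq_zero.mp h2
  simpa [hSdef] using h3
end

section
/- Let u : ℂ ∖ {0} → ℝ be harmonic in the sense that every point z₀ ≠ 0 has an open neighborhood U ⊆ ℂ ∖ {0} and a holomorphic function g on U with u = Re g on U. Suppose there is a constant C > 0 with |u(z)| ≤ C·(1 + |log|z||) for all z ≠ 0. Then there exist real constants α and β such that u(z) = α·log|z| + β for all z ≠ 0. -/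
open Complex Metric MeasureTheory Set Bornology Filter

private lemma conj_intervalIntegral {f : ℝ → ℂ} {a b : ℝ} :
    ∫ x in a..b, (starRingEnd ℂ) (f x) = (starRingEnd ℂ) (∫ x in a..b, f x) := by
  simp only [intervalIntegral, integral_conj, map_sub]

private lemma deriv_zero_of_re_zero {d : ℂ → ℂ} {c z : ℂ} (hd : HasDerivAt d c z)
    (h0 : ∀ᶠ w in nhds z, (d w).re = 0) : c = 0 := by
  have main : ∀ w : ℂ, (c * w).re = 0 := by
    intro w
    have hline : HasDerivAt (fun s : ℂ => z + s * w) w (((0:ℝ) : ℂ)) := by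
      simpa using ((hasDerivAt_id (((0:ℝ):ℂ))).mul_const w).const_add z
    have hd' : HasDerivAt d c (z + ((0:ℝ):ℂ) * w) := by simpa using hd
    have hcomp : HasDerivAt (fun s : ℂ => d (z + s * w)) (c * w) (((0:ℝ) : ℂ)) := by
      exact hd'.comp (((0:ℝ):ℂ)) hline
    have hR : HasDerivAt (fun s : ℝ => (d (z + s * w)).re) ((c * w).re) 0 :=
      hcomp.real_of_complex
    have hcont : Continuous fun s : ℝ => z + (s : ℂ) * w := by continuity
    have h2 : Filter.Tendsto (fun s : ℝ => z + (s : ℂ) * w) (nhds 0) (nhds z) := by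
      have := hcont.continuousAt (x := (0:ℝ))
      unfold ContinuousAt at this
      simpa using this
    have hev : ∀ᶠ s : ℝ in nhds 0, (d (z + (s : ℂ) * w)).re = 0 := h2.eventually h0
    have h0' : HasDerivAt (fun _ : ℝ => (0:ℝ)) ((c * w).re) 0 :=
      hR.congr_of_eventuallyEq (by filter_upwards [hev] with s hs using hs.symm)
    exact h0'.unique (hasDerivAt_const _ _)
  have h1 : c.re = 0 := by simpa using main 1
  have h2 : c.im = 0 := by
    have := main I
    simpa [Complex.mul_re] using this
  exact Complex.ext h1 h2

private lemma exists_entire (v : ℂ → ℝ)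
    (hv : ∀ z₀ : ℂ, ∃ V : Set ℂ, IsOpen V ∧ z₀ ∈ V ∧ ∃ h : ℂ → ℂ,
      DifferentiableOn ℂ h V ∧ ∀ z ∈ V, v z = (h z).re) :
    ∃ F : ℂ → ℂ, Differentiable ℂ F ∧
      ∀ (z w : ℂ) (t : ℝ), HasDerivAt (fun s : ℝ => v (z + s • w)) ((F (z + t • w) * w).re) t := by
  have hv' : ∀ z₀ : ℂ, ∃ p : Set ℂ × (ℂ → ℂ), IsOpen p.1 ∧ z₀ ∈ p.1 ∧
      DifferentiableOn ℂ p.2 p.1 ∧ ∀ z ∈ p.1, v z = (p.2 z).re := by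
    intro z₀; obtain ⟨V, h1, h2, h, h3, h4⟩ := hv z₀; exact ⟨⟨V, h⟩, h1, h2, h3, h4⟩
  choose p hVo0 hVm0 hdiff0 hre0 using hv'
  set V : ℂ → Set ℂ := fun z => (p z).1 with hV
  set h : ℂ → ℂ → ℂ := fun z => (p z).2 with hh
  have hVo : ∀ z₀, IsOpen (V z₀) := hVo0
  have hVm : ∀ z₀, z₀ ∈ V z₀ := hVm0
  have hdiff : ∀ z₀, DifferentiableOn ℂ (h z₀) (V z₀) := hdiff0
  have hre : ∀ z₀ z, z ∈ V z₀ → v z = (h z₀ z).re := hre0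
  set F : ℂ → ℂ := fun z => deriv (h z) z with hF
  have key : ∀ z₀ z, z ∈ V z₀ → F z = deriv (h z₀) z := by
    intro z₀ z hz
    have hz1 : DifferentiableAt ℂ (h z) z := (hdiff z).differentiableAt ((hVo z).mem_nhds (hVm z))
    have hz2 : DifferentiableAt ℂ (h z₀) z := (hdiff z₀).differentiableAt ((hVo z₀).mem_nhds hz)
    have hdd : HasDerivAt (fun w => h z w - h z₀ w) (deriv (h z) z - deriv (h z₀) z) z :=
      hz1.hasDerivAt.sub hz2.hasDerivAt
    have hnb : (V z ∩ V z₀) ∈ nhds z :=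
      ((hVo z).inter (hVo z₀)).mem_nhds ⟨hVm z, hz⟩
    have h0 : ∀ᶠ w in nhds z, ((h z w - h z₀ w)).re = 0 := by
      filter_upwards [hnb] with w hw
      simp [Complex.sub_re, ← hre z w hw.1, ← hre z₀ w hw.2]
    have := deriv_zero_of_re_zero hdd h0
    have := sub_eq_zero.mp this
    simpa [hF] using this
  have hFd : Differentiable ℂ F := by
    intro z₀
    have h1 : DifferentiableOn ℂ (deriv (h z₀)) (V z₀) :=
      (((hdiff z₀).analyticOnNhd (hVo z₀)).deriv).differentiableOn
    have h2 : DifferentiableAt ℂ (deriv (h z₀)) z₀ :=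
      h1.differentiableAt ((hVo z₀).mem_nhds (hVm z₀))
    exact h2.congr_of_eventuallyEq
      (eventually_of_mem ((hVo z₀).mem_nhds (hVm z₀)) (fun z hz => key z₀ z hz))
  refine ⟨F, hFd, ?_⟩
  intro z w t
  set q := z + t • w with hq
  have hp : q ∈ V q := hVm q
  have hda : DifferentiableAt ℂ (h q) q := (hdiff q).differentiableAt ((hVo q).mem_nhds hp)
  have hline : HasDerivAt (fun s : ℂ => z + s * w) w ((t:ℝ):ℂ) := by
    simpa using ((hasDerivAt_id ((t:ℝ):ℂ)).mul_const w).const_add z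
  have hq' : q = z + ((t:ℝ):ℂ) * w := by simp [hq, Complex.real_smul]
  have hda' : HasDerivAt (h q) (deriv (h q) q) (z + ((t:ℝ):ℂ) * w) := by
    rw [← hq']; exact hda.hasDerivAt
  have hcomp : HasDerivAt (fun s : ℂ => h q (z + s * w)) (deriv (h q) q * w) ((t:ℝ):ℂ) := by
    exact hda'.comp (((t:ℝ)):ℂ) hline
  have hR : HasDerivAt (fun s : ℝ => (h q (z + s * w)).re) ((deriv (h q) q * w).re) t :=
    hcomp.real_of_complex
  have hcont : Continuous fun s : ℝ => z + s • w := by continuity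
  have hev : ∀ᶠ s : ℝ in nhds t, z + s • w ∈ V q := by
    have h2 : Filter.Tendsto (fun s : ℝ => z + s • w) (nhds t) (nhds q) := by
      have := hcont.continuousAt (x := t)
      unfold ContinuousAt at this
      simpa [hq] using this
    exact h2.eventually ((hVo q).mem_nhds hp)
  have heq : ∀ᶠ s : ℝ in nhds t, v (z + s • w) = (h q (z + s * w)).re := by
    filter_upwards [hev] with s hs
    rw [hre q _ hs, Complex.real_smul]
  have hfinal : HasDerivAt (fun s : ℝ => v (z + s • w)) ((deriv (h q) q * w).re) t :=
    hR.congr_of_eventuallyEq heq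
  rw [← key q q hp] at hfinal
  exact hfinal

private lemma circle_avg (F : ℂ → ℂ) (hF : Differentiable ℂ F) {r : ℝ} (hr : 0 < r) (c : ℂ) :
    ∫ θ in (0:ℝ)..(2*Real.pi),
      (((F (circleMap c r θ) * Complex.exp (θ * I)).re : ℂ) * Complex.exp (-(θ * I))) =
      Real.pi * F c := by
  have hne : ∀ θ : ℝ, circleMap 0 r θ ≠ 0 := fun θ => circleMap_ne_center hr.ne'
  -- mean value
  have mean : (∫ θ in (0:ℝ)..(2*Real.pi), F (circleMap c r θ)) = (2 * Real.pi) * F c := by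
    have hcau := circleIntegral_sub_inv_smul_of_differentiable_on_off_countable
      (s := ∅) (c := c) (w := c) (f := F) countable_empty (Metric.mem_ball_self hr)
      hF.continuous.continuousOn (fun x _ => hF x)
    simp only [circleIntegral, deriv_circleMap, circleMap_sub_center, smul_eq_mul] at hcau
    have heq : ∀ θ : ℝ, circleMap 0 r θ * I * ((circleMap 0 r θ)⁻¹ * F (circleMap c r θ))
        = I * F (circleMap c r θ) := by
      intro θ
      field_simp [hne θ]
    rw [intervalIntegral.integral_congr (fun θ _ => heq θ)] at hcau
    rw [intervalIntegral.integral_const_mul] at hcau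
    have h2 : I * (∫ θ in (0:ℝ)..(2*Real.pi), F (circleMap c r θ))
        = I * ((2 * Real.pi) * F c) := by rw [hcau]; ring
    exact mul_left_cancel₀ I_ne_zero h2
  -- vanishing second moment
  have vanish : (∫ θ in (0:ℝ)..(2*Real.pi),
      Complex.exp (θ * I) ^ 2 * F (circleMap c r θ)) = 0 := by
    have hzero := circleIntegral_eq_zero_of_differentiable_on_off_countable
      (f := fun z => (z - c) * F z) (c := c) hr.le (s := ∅) countable_empty
      (((continuous_id.sub continuous_const).mul hF.continuous)).continuousOn
      (fun z _ => (differentiableAt_id.sub_const c).mul (hF z))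
    simp only [circleIntegral, deriv_circleMap, circleMap_sub_center, smul_eq_mul] at hzero
    have heq : ∀ θ : ℝ, circleMap 0 r θ * I * (circleMap 0 r θ * F (circleMap c r θ))
        = ((r:ℂ)^2 * I) * (Complex.exp (θ * I) ^ 2 * F (circleMap c r θ)) := by
      intro θ
      simp only [circleMap_zero]
      ring
    rw [intervalIntegral.integral_congr (fun θ _ => heq θ)] at hzero
    rw [intervalIntegral.integral_const_mul] at hzero
    have hr2 : ((r:ℂ)^2 * I) ≠ 0 := by
      simp [hr.ne', I_ne_zero]
    exact (mul_eq_zero.mp hzero).resolve_left hr2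
  -- pointwise identity
  have hpt : ∀ θ : ℝ,
      (((F (circleMap c r θ) * Complex.exp (θ * I)).re : ℂ) * Complex.exp (-(θ * I)))
      = (1/2 : ℂ) * F (circleMap c r θ)
        + (1/2 : ℂ) * (starRingEnd ℂ) (Complex.exp (θ * I) ^ 2 * F (circleMap c r θ)) := by
    intro θ
    set G := F (circleMap c r θ)
    set E := Complex.exp ((θ:ℂ) * I)
    set E' := Complex.exp (-((θ:ℂ) * I))
    have hEE' : E * E' = 1 := by
      rw [← Complex.exp_add]
      simp
    have hconjE : (starRingEnd ℂ) E = E' := by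
      rw [← Complex.exp_conj]
      congr 1
      simp [Complex.conj_ofReal]
    have hre2 : ((G * E).re : ℂ) = (G * E + (starRingEnd ℂ) (G * E)) / 2 := by
      have := Complex.add_conj (G * E)
      rw [this]
      push_cast
      ring
    rw [hre2]
    have hconj : (starRingEnd ℂ) (G * E) = (starRingEnd ℂ) G * E' := by
      rw [map_mul, hconjE]
    have hconj2 : (starRingEnd ℂ) (E ^ 2 * G) = E' ^ 2 * (starRingEnd ℂ) G := by
      rw [map_mul, map_pow, hconjE]
    rw [hconj, hconj2]
    have : (G * E + (starRingEnd ℂ) G * E') / 2 * E'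
        = (G * (E * E') + (starRingEnd ℂ) G * (E' * E')) / 2 := by ring
    rw [this, hEE']
    ring
  rw [intervalIntegral.integral_congr (fun θ _ => hpt θ)]
  rw [intervalIntegral.integral_add, intervalIntegral.integral_const_mul,
    intervalIntegral.integral_const_mul, conj_intervalIntegral, mean, vanish]
  · push_cast
    simp
    ring
  · apply Continuous.intervalIntegrable
    exact continuous_const.mul (hF.continuous.comp (continuous_circleMap c r))
  · apply Continuous.intervalIntegrable
    apply continuous_const.mul
    apply Complex.continuous_conj.comp
    exact ((Complex.continuous_exp.comp (continuous_ofReal.mul continuous_const)).pow 2).mul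
      (hF.continuous.comp (continuous_circleMap c r))

private lemma radial_id (v : ℂ → ℝ) (hvc : Continuous v) (F : ℂ → ℂ) (hFd : Differentiable ℂ F)
    (hseg : ∀ (z w : ℂ) (t : ℝ), HasDerivAt (fun s : ℝ => v (z + s • w)) ((F (z + t • w) * w).re) t)
    (z₀ : ℂ) {R : ℝ} (hR : 0 < R) :
    (∫ θ in (0:ℝ)..(2*Real.pi), ((v (circleMap z₀ R θ) : ℂ) * Complex.exp (-(θ * I))))
      = (R : ℂ) * Real.pi * F z₀ := by
  have h2π : (0:ℝ) ≤ 2*Real.pi := by positivity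
  have hcm : ∀ (r θ : ℝ), z₀ + r • Complex.exp (θ * I) = circleMap z₀ r θ := by
    intro r θ; simp [circleMap, Complex.real_smul]
  set g : ℝ → ℝ → ℝ := fun θ r => (F (circleMap z₀ r θ) * Complex.exp (θ * I)).re with hg
  have hgc : Continuous fun q : ℝ × ℝ => g q.1 q.2 := by
    apply Complex.continuous_re.comp
    apply Continuous.mul
    · apply hFd.continuous.comp
      unfold circleMap
      fun_prop
    · fun_prop
  have hFTC : ∀ θ : ℝ, v (circleMap z₀ R θ) = v z₀ + ∫ r in (0:ℝ)..R, g θ r := by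
    intro θ
    have h1 : ∀ r ∈ Set.uIcc (0:ℝ) R,
        HasDerivAt (fun s : ℝ => v (z₀ + s • Complex.exp (θ*I))) (g θ r) r := by
      intro r _
      have := hseg z₀ (Complex.exp (θ*I)) r
      rwa [hcm r θ] at this
    have h2 : IntervalIntegrable (g θ) MeasureTheory.volume 0 R :=
      (hgc.comp (continuous_const.prodMk continuous_id)).intervalIntegrable 0 R
    have h3 := intervalIntegral.integral_eq_sub_of_hasDerivAt h1 h2
    have e1 : z₀ + (R:ℝ) • Complex.exp (θ*I) = circleMap z₀ R θ := hcm R θ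
    have e0 : z₀ + (0:ℝ) • Complex.exp (θ*I) = z₀ := by simp
    rw [e1, e0] at h3
    linarith [h3]
  have step1 : (∫ θ in (0:ℝ)..(2*Real.pi), ((v (circleMap z₀ R θ) : ℂ) * Complex.exp (-(θ * I))))
      = ∫ θ in (0:ℝ)..(2*Real.pi), (((v z₀ : ℂ) * Complex.exp (-(θ * I)))
          + ∫ r in (0:ℝ)..R, ((g θ r : ℂ) * Complex.exp (-(θ * I)))) := by
    apply intervalIntegral.integral_congr
    intro θ _
    show (v (circleMap z₀ R θ) : ℂ) * Complex.exp (-(θ * I))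
      = (v z₀ : ℂ) * Complex.exp (-(θ * I))
        + ∫ r in (0:ℝ)..R, ((g θ r : ℂ) * Complex.exp (-(θ * I)))
    rw [hFTC θ]
    rw [intervalIntegral.integral_mul_const, intervalIntegral.integral_ofReal]
    push_cast
    ring
  have hcont2 : Continuous (fun θ : ℝ => ∫ r in (0:ℝ)..R, ((g θ r : ℂ) * Complex.exp (-(θ * I)))) := by
    have heq : (fun θ : ℝ => ∫ r in (0:ℝ)..R, ((g θ r : ℂ) * Complex.exp (-(θ * I))))
        = fun θ : ℝ => ((v (circleMap z₀ R θ) : ℂ) - (v z₀ : ℂ)) * Complex.exp (-(θ * I)) := by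
      funext θ
      rw [intervalIntegral.integral_mul_const, intervalIntegral.integral_ofReal, hFTC θ]
      push_cast
      ring
    rw [heq]
    apply Continuous.mul
    · apply Continuous.sub _ continuous_const
      apply Complex.continuous_ofReal.comp
      exact hvc.comp (continuous_circleMap z₀ R)
    · fun_prop
  have hint1 : IntervalIntegrable (fun θ : ℝ => ((v z₀ : ℂ) * Complex.exp (-(θ * I))))
      MeasureTheory.volume 0 (2*Real.pi) := by
    apply Continuous.intervalIntegrable; fun_prop
  have hint2 : IntervalIntegrable (fun θ : ℝ => ∫ r in (0:ℝ)..R, ((g θ r : ℂ) * Complex.exp (-(θ * I))))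
      MeasureTheory.volume 0 (2*Real.pi) := hcont2.intervalIntegrable 0 _
  rw [step1, intervalIntegral.integral_add hint1 hint2]
  -- first integral is zero
  have hexp0 : (∫ θ in (0:ℝ)..(2*Real.pi), Complex.exp (-(θ * I))) = 0 := by
    have hptw : ∀ θ ∈ Set.uIcc (0:ℝ) (2*Real.pi),
        Complex.exp (-((θ:ℂ) * I)) = Complex.exp ((-I) * (θ:ℝ)) := by
      intro θ _; ring_nf
    rw [intervalIntegral.integral_congr hptw]
    rw [integral_exp_mul_complex (by simp [I_ne_zero])]
    have e2 : (-I) * ((2*Real.pi:ℝ):ℂ) = -(2*(Real.pi:ℂ)*I) := by push_cast; ring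
    rw [e2, Complex.exp_neg, Complex.exp_two_pi_mul_I]
    simp
  have hzero1 : (∫ θ in (0:ℝ)..(2*Real.pi), ((v z₀ : ℂ) * Complex.exp (-(θ * I)))) = 0 := by
    rw [intervalIntegral.integral_const_mul, hexp0, mul_zero]
  rw [hzero1, zero_add]
  -- Fubini swap
  have hKc : Continuous (Function.uncurry fun θ r : ℝ => ((g θ r : ℂ) * Complex.exp (-(θ * I)))) := by
    apply Continuous.mul
    · exact Complex.continuous_ofReal.comp hgc
    · apply Complex.continuous_exp.comp
      fun_prop
  have hswap : (∫ θ in (0:ℝ)..(2*Real.pi), ∫ r in (0:ℝ)..R, ((g θ r : ℂ) * Complex.exp (-(θ * I))))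
      = ∫ r in (0:ℝ)..R, ∫ θ in (0:ℝ)..(2*Real.pi), ((g θ r : ℂ) * Complex.exp (-(θ * I))) := by
    rw [intervalIntegral.integral_of_le h2π, intervalIntegral.integral_of_le hR.le]
    simp_rw [intervalIntegral.integral_of_le hR.le, intervalIntegral.integral_of_le h2π]
    apply MeasureTheory.integral_integral_swap
    rw [Measure.prod_restrict]
    apply MeasureTheory.IntegrableOn.mono_set
      (t := Set.Icc (0:ℝ) (2*Real.pi) ×ˢ Set.Icc (0:ℝ) R)
    · exact ContinuousOn.integrableOn_compact (isCompact_Icc.prod isCompact_Icc)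
        hKc.continuousOn
    · exact Set.prod_mono Set.Ioc_subset_Icc_self Set.Ioc_subset_Icc_self
  rw [hswap]
  have hconst : (∫ r in (0:ℝ)..R, ∫ θ in (0:ℝ)..(2*Real.pi), ((g θ r : ℂ) * Complex.exp (-(θ * I))))
      = ∫ r in (0:ℝ)..R, ((Real.pi : ℂ) * F z₀) := by
    apply intervalIntegral.integral_congr_ae
    filter_upwards with r hr
    rw [Set.uIoc_of_le hR.le] at hr
    have := circle_avg F hFd hr.1 z₀
    simpa [hg] using this
  rw [hconst, intervalIntegral.integral_const]
  rw [sub_zero, Complex.real_smul]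
  ring

/-- A real function harmonic on the punctured plane (locally the real part of a
holomorphic function) growing at most logarithmically near `0` and near
infinity is of the form `α·log|z| + β`. -/
theorem punctured_plane_log_growth (u : ℂ → ℝ)
    (hharm : ∀ z₀ : ℂ, z₀ ≠ 0 → ∃ U : Set ℂ, IsOpen U ∧ z₀ ∈ U ∧ U ⊆ {(0 : ℂ)}ᶜ ∧
      ∃ g : ℂ → ℂ, DifferentiableOn ℂ g U ∧ ∀ z ∈ U, u z = (g z).re)
    (C : ℝ) (hC : 0 < C)
    (hgrowth : ∀ z : ℂ, z ≠ 0 → |u z| ≤ C * (1 + |Real.log ‖z‖|)) :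
    ∃ α β : ℝ, ∀ z : ℂ, z ≠ 0 → u z = α * Real.log ‖z‖ + β := by
  set v : ℂ → ℝ := fun z => u (Complex.exp z) with hvdef
  have hv : ∀ z₀ : ℂ, ∃ V : Set ℂ, IsOpen V ∧ z₀ ∈ V ∧ ∃ h : ℂ → ℂ,
      DifferentiableOn ℂ h V ∧ ∀ z ∈ V, v z = (h z).re := by
    intro z₀
    obtain ⟨U, hUo, hUm, _, g, hg, hgre⟩ := hharm (Complex.exp z₀) (Complex.exp_ne_zero z₀)
    refine ⟨Complex.exp ⁻¹' U, hUo.preimage Complex.continuous_exp, hUm,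
      g ∘ Complex.exp, ?_, ?_⟩
    · exact hg.comp Complex.differentiable_exp.differentiableOn (fun z hz => hz)
    · intro z hz; exact hgre _ hz
  -- v is continuous
  have hvc : Continuous v := by
    rw [continuous_iff_continuousAt]
    intro z₀
    obtain ⟨V, hVo, hVm, h, hdiff, hre⟩ := hv z₀
    have h1 : ContinuousAt (fun z => (h z).re) z₀ :=
      (Complex.continuous_re.continuousAt.comp
        ((hdiff.differentiableAt (hVo.mem_nhds hVm)).continuousAt))
    apply h1.congr
    filter_upwards [hVo.mem_nhds hVm] with z hz
    exact (hre z hz).symm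
  obtain ⟨F, hFd, hseg⟩ := exists_entire v hv
  -- growth for v
  have hvg : ∀ z : ℂ, |v z| ≤ C * (1 + |z.re|) := by
    intro z
    have := hgrowth (Complex.exp z) (Complex.exp_ne_zero z)
    simpa [hvdef, Complex.norm_exp, Real.log_exp] using this
  -- boundedness of F
  have hb : ∀ z₀ : ℂ, ‖F z₀‖ ≤ 4 * C := by
    intro z₀
    set R : ℝ := 1 + ‖z₀‖ with hRdef
    have hR : 0 < R := by positivity
    have hid := radial_id v hvc F hFd hseg z₀ hR
    have hbound : ‖∫ θ in (0:ℝ)..(2*Real.pi),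
        ((v (circleMap z₀ R θ) : ℂ) * Complex.exp (-(θ * I)))‖
        ≤ (C * (1 + (‖z₀‖ + R))) * |2*Real.pi - 0| := by
      apply intervalIntegral.norm_integral_le_of_norm_le_const
      intro θ _
      have e1 : ‖Complex.exp (-((θ:ℂ) * I))‖ = 1 := by
        rw [Complex.norm_exp]
        simp
      rw [norm_mul, e1, mul_one, Complex.norm_real, Real.norm_eq_abs]
      have h2 : |(circleMap z₀ R θ).re| ≤ ‖z₀‖ + R := by
        have h3 : ‖circleMap z₀ R θ‖ ≤ ‖z₀‖ + R := by
          unfold circleMap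
          refine le_trans (norm_add_le _ _) ?_
          gcongr
          simp [Complex.norm_exp, abs_of_pos hR]
        exact le_trans (Complex.abs_re_le_norm _) h3
      calc |v (circleMap z₀ R θ)| ≤ C * (1 + |(circleMap z₀ R θ).re|) := hvg _
        _ ≤ C * (1 + (‖z₀‖ + R)) := by gcongr
    rw [hid] at hbound
    have hnorm : ‖(R : ℂ) * Real.pi * F z₀‖ = R * Real.pi * ‖F z₀‖ := by
      rw [norm_mul, norm_mul, Complex.norm_real, Complex.norm_real,
        Real.norm_eq_abs, Real.norm_eq_abs, abs_of_pos hR, abs_of_pos Real.pi_pos]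
    rw [hnorm] at hbound
    have hπ : (0:ℝ) < Real.pi := Real.pi_pos
    have key : R * Real.pi * ‖F z₀‖ ≤ C * (2 * R) * (2 * Real.pi) := by
      calc R * Real.pi * ‖F z₀‖ ≤ (C * (1 + (‖z₀‖ + R))) * |2*Real.pi - 0| := hbound
        _ = C * (1 + (‖z₀‖ + R)) * (2 * Real.pi) := by
            rw [sub_zero, abs_of_pos (by positivity)]
        _ ≤ C * (2 * R) * (2 * Real.pi) := by
            have : 1 + (‖z₀‖ + R) ≤ 2 * R := by
              rw [hRdef]; nlinarith [norm_nonneg z₀]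
            gcongr
    have : ‖F z₀‖ * (R * Real.pi) ≤ (4 * C) * (R * Real.pi) := by nlinarith
    exact le_of_mul_le_mul_right this (by positivity)
  -- Liouville
  have hbdd : IsBounded (Set.range F) := by
    rw [isBounded_iff_forall_norm_le]
    exact ⟨4 * C, by rintro x ⟨z, rfl⟩; exact hb z⟩
  have hFconst : ∀ z : ℂ, F z = F 0 := fun z => hFd.apply_eq_apply_of_bounded hbdd z 0
  set a : ℂ := F 0 with ha
  -- linear structure of v
  have hlin : ∀ w : ℂ, v w = (a * w).re + v 0 := by
    intro w
    have hd : ∀ t : ℝ, t ∈ Set.uIcc (0:ℝ) 1 →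
        HasDerivAt (fun s : ℝ => v ((0:ℂ) + s • w)) ((a * w).re) t := by
      intro t _
      have := hseg 0 w t
      rwa [hFconst ((0:ℂ) + t • w)] at this
    have h3 := intervalIntegral.integral_eq_sub_of_hasDerivAt hd
      (intervalIntegrable_const)
    simp only [intervalIntegral.integral_const, sub_zero, one_smul, zero_add] at h3
    have e0 : v ((0:ℝ) • w) = v 0 := by norm_num
    rw [e0] at h3
    linarith [h3]
  -- a is real
  have h30 : v 0 = u 1 := by
    show u (Complex.exp 0) = u 1
    rw [Complex.exp_zero]
  have haim : a.im = 0 := by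
    set w₀ : ℂ := ((2*Real.pi:ℝ):ℂ) * I with hw₀
    have hexp : Complex.exp w₀ = 1 := by
      rw [hw₀]; push_cast; exact Complex.exp_two_pi_mul_I
    have h1 := hlin w₀
    have h2 : v w₀ = u 1 := by
      show u (Complex.exp w₀) = u 1
      rw [hexp]
    rw [h2, h30] at h1
    have h4 : (a * w₀).re = 0 := by linarith
    rw [hw₀] at h4
    have h5 : (a * (((2*Real.pi:ℝ):ℂ) * I)).re = -(2*Real.pi*a.im) := by
      simp [Complex.mul_re]
      ring
    rw [h5] at h4
    nlinarith [Real.pi_pos]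
  refine ⟨a.re, u 1, ?_⟩
  intro z hz
  have hexp : Complex.exp (Complex.log z) = z := Complex.exp_log hz
  have h1 := hlin (Complex.log z)
  have h2 : v (Complex.log z) = u z := by
    show u (Complex.exp (Complex.log z)) = u z
    rw [hexp]
  rw [h2, h30] at h1
  have h4 : (a * Complex.log z).re = a.re * Real.log ‖z‖ := by
    rw [Complex.mul_re, haim, Complex.log_re]
    ring
  rw [h4] at h1
  exact h1
end

section
/- Let H : ℂ → ℂ be an entire function and C > 0 a constant such that |Re H(z)| ≤ C·(1 + log(1 + |z|)) for all z ∈ ℂ. Then H is constant. -/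
open Complex

/-- Key derivative estimate: on a disk of radius `R` around `c`, the function
`(A - H)⁻¹` (with `A` slightly above the max of `Re H` there) is bounded by 1,
so the Cauchy estimate bounds `‖deriv H c‖`. -/
lemma entire_log_re_deriv_bound (H : ℂ → ℂ) (hH : Differentiable ℂ H)
    (C : ℝ) (hC : 0 < C)
    (hgrowth : ∀ z : ℂ, |(H z).re| ≤ C * (1 + Real.log (1 + ‖z‖)))
    (c : ℂ) {R : ℝ} (hR : 0 < R) :
    ‖deriv H c‖ ≤ (C * (1 + Real.log (1 + ‖c‖ + R)) + 1
        + ‖H c‖) ^ 2 / R := by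
  set A : ℝ := C * (1 + Real.log (1 + ‖c‖ + R)) + 1 with hA
  have key : ∀ z ∈ Metric.closedBall c R, (H z).re ≤ A - 1 := by
    intro z hz
    have habs : ‖z‖ ≤ ‖c‖ + R := by
      have : ‖z - c‖ ≤ R := by
        simpa [Complex.dist_eq] using Metric.mem_closedBall.1 hz
      calc ‖z‖ = ‖z - c + c‖ := by ring_nf
        _ ≤ ‖z - c‖ + ‖c‖ := norm_add_le _ _
        _ ≤ ‖c‖ + R := by linarith
    have h1 : (H z).re ≤ C * (1 + Real.log (1 + ‖z‖)) :=
      (le_abs_self _).trans (hgrowth z)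
    have h2 : Real.log (1 + ‖z‖) ≤ Real.log (1 + ‖c‖ + R) := by
      apply Real.log_le_log (by positivity)
      linarith
    have : C * (1 + Real.log (1 + ‖z‖))
        ≤ C * (1 + Real.log (1 + ‖c‖ + R)) := by
      apply mul_le_mul_of_nonneg_left (by linarith) hC.le
    simp only [hA]
    linarith
  have hre : ∀ z ∈ Metric.closedBall c R, (1 : ℝ) ≤ ((A : ℂ) - H z).re := by
    intro z hz
    have := key z hz
    simp only [Complex.sub_re, Complex.ofReal_re]
    linarith
  have hne : ∀ z ∈ Metric.closedBall c R, (A : ℂ) - H z ≠ 0 := by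
    intro z hz h0
    have := hre z hz
    rw [h0] at this
    simp at this
    linarith
  have habs1 : ∀ z ∈ Metric.closedBall c R, (1 : ℝ) ≤ ‖(A : ℂ) - H z‖ := by
    intro z hz
    exact (hre z hz).trans (Complex.re_le_norm _)
  set g : ℂ → ℂ := fun z => ((A : ℂ) - H z)⁻¹ with hg
  have hdiff : DiffContOnCl ℂ g (Metric.ball c R) := by
    constructor
    · intro z hz
      have hz' : z ∈ Metric.closedBall c R := Metric.ball_subset_closedBall hz
      exact (((differentiableAt_const _).sub (hH z)).inv (hne z hz')).differentiableWithinAt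
    · rw [closure_ball c hR.ne']
      exact ContinuousOn.inv₀
        (continuous_const.sub hH.continuous).continuousOn hne
  have hbound : ∀ z ∈ Metric.sphere c R, ‖g z‖ ≤ 1 := by
    intro z hz
    have hz' : z ∈ Metric.closedBall c R := Metric.sphere_subset_closedBall hz
    rw [hg]
    simp only [norm_inv]
    have h1 := habs1 z hz'
    rw [inv_le_one_iff₀]
    right; exact h1
  have hderiv_g : ‖deriv g c‖ ≤ 1 / R :=
    Complex.norm_deriv_le_of_forall_mem_sphere_norm_le hR hdiff hbound
  have hc' : c ∈ Metric.closedBall c R := Metric.mem_closedBall_self hR.le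
  have hd : HasDerivAt g (deriv H c / ((A : ℂ) - H c) ^ 2) c := by
    have h1 : HasDerivAt (fun z => (A : ℂ) - H z) (0 - deriv H c) c :=
      (hasDerivAt_const c _).sub (hH c).hasDerivAt
    have h2 : HasDerivAt g _ c := h1.inv (hne c hc')
    convert h2 using 1
    ring
  rw [hd.deriv] at hderiv_g
  have hD : (A : ℂ) - H c ≠ 0 := hne c hc'
  have hnum : ‖deriv H c‖ = ‖deriv H c / ((A : ℂ) - H c) ^ 2‖
      * ‖(A : ℂ) - H c‖ ^ 2 := by
    simp only [norm_div, norm_pow]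
    rw [div_mul_cancel₀]
    exact pow_ne_zero _ (norm_ne_zero_iff.mpr hD)
  have hlognn : (0:ℝ) ≤ Real.log (1 + ‖c‖ + R) :=
    Real.log_nonneg (by linarith [norm_nonneg c])
  have hA0 : (0:ℝ) ≤ A := by rw [hA]; nlinarith
  have habsle : ‖(A : ℂ) - H c‖ ≤ A + ‖H c‖ := by
    calc ‖(A : ℂ) - H c‖ ≤ ‖(A : ℂ)‖ + ‖H c‖ := by
          simpa using norm_sub_le ((A : ℂ)) (H c)
      _ = A + ‖H c‖ := by
          rw [Complex.norm_real, Real.norm_eq_abs, _root_.abs_of_nonneg hA0]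
  have hsq : ‖(A : ℂ) - H c‖ ^ 2 ≤ (A + ‖H c‖) ^ 2 :=
    pow_le_pow_left₀ (norm_nonneg _) habsle 2
  calc ‖deriv H c‖ = ‖deriv H c / ((A : ℂ) - H c) ^ 2‖
        * ‖(A : ℂ) - H c‖ ^ 2 := hnum
    _ ≤ (1 / R) * (A + ‖H c‖) ^ 2 := by
        apply mul_le_mul hderiv_g hsq (by positivity) (by positivity)
    _ = (A + ‖H c‖) ^ 2 / R := by ring

/-- Borel–Carathéodory-type Liouville theorem: an entire function whose real
part grows at most logarithmically is constant. -/
theorem entire_log_re_constant (H : ℂ → ℂ) (hH : Differentiable ℂ H)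
    (C : ℝ) (hC : 0 < C)
    (hgrowth : ∀ z : ℂ, |(H z).re| ≤ C * (1 + Real.log (1 + ‖z‖))) :
    ∀ z : ℂ, H z = H 0 := by
  have hderiv : ∀ c : ℂ, deriv H c = 0 := by
    intro c
    set a : ℝ := C + 1 + ‖H c‖ with ha
    set b : ℝ := 1 + ‖c‖ with hb
    have ha0 : 0 < a := by positivity
    have hb0 : 0 < b := by positivity
    -- eventually: bound by (a + 2C)^2 * (log R)^2 / R
    have hev : ∀ᶠ R in Filter.atTop,
        ‖deriv H c‖ ≤ (a + 2 * C) ^ 2 * (Real.log R ^ 2 / R) := by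
      filter_upwards [Filter.eventually_ge_atTop (max (max b 2) (Real.exp 1))]
        with R hRge
      have hRb : b ≤ R := le_trans (le_max_left _ _) (le_trans (le_max_left _ _) hRge)
      have hR2 : (2:ℝ) ≤ R := le_trans (le_max_right _ _) (le_trans (le_max_left _ _) hRge)
      have hRe : Real.exp 1 ≤ R := le_trans (le_max_right _ _) hRge
      have hR0 : (0:ℝ) < R := by linarith
      have hlog1 : (1:ℝ) ≤ Real.log R := by
        rw [← Real.log_exp 1]
        exact Real.log_le_log (Real.exp_pos 1) hRe
      have hbR : b + R ≤ R ^ 2 := by nlinarith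
      have hlog2 : Real.log (b + R) ≤ 2 * Real.log R := by
        calc Real.log (b + R) ≤ Real.log (R ^ 2) := Real.log_le_log (by linarith) hbR
          _ = 2 * Real.log R := by
              rw [Real.log_pow]; push_cast; ring
      have hbase : C * (1 + Real.log (b + R)) + 1 + ‖H c‖
          ≤ (a + 2 * C) * Real.log R := by
        have h1 : C * Real.log (b + R) ≤ 2 * C * Real.log R := by
          calc C * Real.log (b + R) ≤ C * (2 * Real.log R) :=
                mul_le_mul_of_nonneg_left hlog2 hC.le
            _ = 2 * C * Real.log R := by ring
        have h2 : a ≤ a * Real.log R := le_mul_of_one_le_right ha0.le hlog1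
        calc C * (1 + Real.log (b + R)) + 1 + ‖H c‖
            = a + C * Real.log (b + R) := by rw [ha]; ring
          _ ≤ a * Real.log R + 2 * C * Real.log R := by linarith
          _ = (a + 2 * C) * Real.log R := by ring
      have hmain := entire_log_re_deriv_bound H hH C hC hgrowth c hR0
      rw [hb] at hbase
      have hlognn : (0:ℝ) ≤ Real.log (1 + ‖c‖ + R) :=
        Real.log_nonneg (by linarith [norm_nonneg c])
      have hbnn : (0:ℝ) ≤ C * (1 + Real.log (1 + ‖c‖ + R)) + 1
          + ‖H c‖ := by
        nlinarith [norm_nonneg (H c)]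
      calc ‖deriv H c‖ ≤ (C * (1 + Real.log (1 + ‖c‖ + R)) + 1
            + ‖H c‖) ^ 2 / R := hmain
        _ ≤ ((a + 2 * C) * Real.log R) ^ 2 / R := by
            gcongr
        _ = (a + 2 * C) ^ 2 * (Real.log R ^ 2 / R) := by ring
    have htend : Filter.Tendsto (fun R => (a + 2 * C) ^ 2 * (Real.log R ^ 2 / R))
        Filter.atTop (nhds 0) := by
      have h0 := Real.tendsto_pow_log_div_mul_add_atTop 1 0 2 one_ne_zero
      simp only [one_mul, add_zero] at h0
      simpa using h0.const_mul ((a + 2 * C) ^ 2)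
    have : ‖deriv H c‖ ≤ 0 := ge_of_tendsto htend hev
    simpa using le_antisymm this (norm_nonneg _)
  intro z
  exact is_const_of_deriv_eq_zero hH hderiv z 0
end

section
/- Let κ ∈ (0,1) and p, q, t ∈ ℂ with p·q = t² and |q| ≤ |t|. Suppose that for every ω ∈ ℂ with |ω| = 1 one has 2·|Re(t·ω)| ≤ κ·|p·ω + conj(q·ω)|. Then |t| ≤ κ⁻¹·(1 − √(1 − κ²))·|p|. In particular, since κ⁻¹(1 − √(1 − κ²)) < 1 for κ < 1, if p ≠ 0 then |t/p| is bounded by a constant strictly less than 1 depending only on κ. -/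
open Complex

/-- Pointwise bound on the Beltrami coefficient of the conformal
parametrization of a space-like surface: if `p·q = t²`, `|q| ≤ |t|`, and in
every unit direction `ω` one has `2|Re(t·ω)| ≤ κ·|p·ω + conj(q·ω)|`, then
`|t| ≤ κ⁻¹(1 − √(1 − κ²))·|p|`, a constant strictly less than `1` times `|p|`. -/
theorem beltrami_coefficient_bound (κ : ℝ) (hκ0 : 0 < κ) (hκ1 : κ < 1)
    (p q t : ℂ) (hconf : p * q = t ^ 2) (hqt : ‖q‖ ≤ ‖t‖)
    (hlip : ∀ ω : ℂ, ‖ω‖ = 1 →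
      2 * |(t * ω).re| ≤ κ * ‖p * ω + (starRingEnd ℂ) (q * ω)‖) :
    ‖t‖ ≤ κ⁻¹ * (1 - Real.sqrt (1 - κ ^ 2)) * ‖p‖ ∧
    κ⁻¹ * (1 - Real.sqrt (1 - κ ^ 2)) < 1 := by
  set P := ‖p‖ with hP
  set T := ‖t‖ with hT
  set Q := ‖q‖ with hQ
  set s := Real.sqrt (1 - κ ^ 2) with hs
  have hs2 : s ^ 2 = 1 - κ ^ 2 := Real.sq_sqrt (by nlinarith)
  have hs0 : 0 ≤ s := Real.sqrt_nonneg _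
  have hP0 : 0 ≤ P := norm_nonneg p
  have hT0 : 0 ≤ T := norm_nonneg t
  have hQ0 : 0 ≤ Q := norm_nonneg q
  have hPQ : P * Q = T ^ 2 := by
    rw [hP, hQ, hT, ← norm_mul, hconf, norm_pow]
  have hTP : T ≤ P := by nlinarith [mul_le_mul_of_nonneg_left hqt hP0]
  -- key inequality: 2 T P ≤ κ (P² + T²)
  have key : 2 * T * P ≤ κ * (P ^ 2 + T ^ 2) := by
    rcases eq_or_ne t 0 with ht | ht
    · have : T = 0 := by simp [hT, ht]
      nlinarith
    · have hTpos : 0 < T := norm_pos_iff.mpr ht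
      set ω : ℂ := (starRingEnd ℂ) t / (T : ℂ) with hω
      have hωabs : ‖ω‖ = 1 := by
        rw [hω, norm_div, Complex.norm_conj, Complex.norm_real, Real.norm_eq_abs,
          abs_of_pos hTpos, ← hT, div_self hTpos.ne']
      have htω : t * ω = (T : ℂ) := by
        rw [hω, mul_div_assoc', Complex.mul_conj]
        rw [div_eq_iff (by exact_mod_cast hTpos.ne')]
        norm_cast
        rw [← Complex.sq_norm, ← hT]; ring
      have h1 := hlip ω hωabs
      rw [htω] at h1
      have h2 : |((T : ℂ)).re| = T := by
        simp [abs_of_pos hTpos]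
      rw [h2] at h1
      have h3 : ‖p * ω + (starRingEnd ℂ) (q * ω)‖ ≤ P + Q := by
        refine (norm_add_le _ _).trans ?_
        rw [Complex.norm_conj, norm_mul, norm_mul, hωabs]
        simp [hP, hQ]
      have h4 : 2 * T ≤ κ * (P + Q) := h1.trans (by nlinarith)
      nlinarith [mul_le_mul_of_nonneg_right h4 hP0]
  -- from the key inequality: s P ≤ P − κ T
  have hPκT : 0 ≤ P - κ * T := by nlinarith
  have hsq : (1 - κ ^ 2) * P ^ 2 ≤ (P - κ * T) ^ 2 := by nlinarith
  have hsP : s * P ≤ P - κ * T := by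
    have h1 : s * P = Real.sqrt ((1 - κ ^ 2) * P ^ 2) := by
      rw [Real.sqrt_mul (by nlinarith), Real.sqrt_sq hP0]
    rw [h1]
    calc Real.sqrt ((1 - κ ^ 2) * P ^ 2) ≤ Real.sqrt ((P - κ * T) ^ 2) :=
          Real.sqrt_le_sqrt hsq
      _ = P - κ * T := Real.sqrt_sq hPκT
  constructor
  · have hκT : κ * T ≤ (1 - s) * P := by nlinarith
    calc T = κ⁻¹ * (κ * T) := by field_simp
      _ ≤ κ⁻¹ * ((1 - s) * P) :=
          mul_le_mul_of_nonneg_left hκT (inv_nonneg.2 hκ0.le)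
      _ = κ⁻¹ * (1 - s) * P := by ring
  · have h4 : 1 - κ < s := by
      apply lt_of_pow_lt_pow_left₀ 2 hs0
      nlinarith
    have : κ⁻¹ * (1 - s) < κ⁻¹ * κ :=
      mul_lt_mul_of_pos_left (by linarith) (inv_pos.2 hκ0)
    simpa [inv_mul_cancel₀ hκ0.ne'] using this
end
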